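/- For every prime power $q$ and integers $1 \le s \le k$, we have $1 \le q^{-s(k-s)}\binom{k}{s}_q \le \frac{q}{q-1} e^{q/((q^2-1)(q-1))}$. -/

import Mathlib

open Finset

/-- The Gaussian (q-binomial) coefficient, as a rational number. -/
noncomputable def qbin (q k s : ℕ) : ℚ :=
  (∏ i ∈ Finset.range s, ((q : ℚ) ^ (k - i) - 1)) /
    (∏ i ∈ Finset.range s, ((q : ℚ) ^ (s - i) - 1))

private lemma qbin_aux_exp {x : ℝ} (h0 : 0 ≤ x) (h1 : x < 1) :
    1 / (1 - x) ≤ Real.exp (x / (1 - x)) := by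
  have h : (0:ℝ) < 1 - x := by linarith
  have h2 := Real.add_one_le_exp (x / (1 - x))
  have hx : 1 / (1 - x) = x / (1 - x) + 1 := by field_simp; ring
  linarith

private lemma qbin_aux_main (Q : ℝ) (hQ : 2 ≤ Q) (k s : ℕ) (hs : 1 ≤ s) (hsk : s ≤ k) :
    1 ≤ (∏ i ∈ range s, ((Q ^ (k - i) - 1) / ((Q ^ (s - i) - 1) * Q ^ (k - s)))) ∧
    (∏ i ∈ range s, ((Q ^ (k - i) - 1) / ((Q ^ (s - i) - 1) * Q ^ (k - s)))) ≤
      Q / (Q - 1) * Real.exp (Q / ((Q ^ 2 - 1) * (Q - 1))) := by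
  have hQ0 : (0:ℝ) < Q := by linarith
  have hQ1 : (1:ℝ) < Q := by linarith
  have hpow1 : ∀ n : ℕ, (1:ℝ) ≤ Q ^ n := fun n => one_le_pow₀ (le_of_lt hQ1)
  have hfac : ∀ n : ℕ, n ≠ 0 → (2:ℝ) ≤ Q ^ n := fun n hn =>
    hQ.trans (le_self_pow₀ (le_of_lt hQ1) hn)
  -- termwise lower bound
  have h1 : ∀ i ∈ range s, 1 ≤ (Q ^ (k - i) - 1) / ((Q ^ (s - i) - 1) * Q ^ (k - s)) := by
    intro i hi
    rw [mem_range] at hi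
    have h2i : (2:ℝ) ≤ Q ^ (s - i) := hfac _ (by omega)
    have hbpos : (0:ℝ) < (Q ^ (s - i) - 1) * Q ^ (k - s) :=
      mul_pos (by linarith) (by positivity)
    rw [le_div_iff₀ hbpos]
    have hsplit : Q ^ (s - i) * Q ^ (k - s) = Q ^ (k - i) := by
      rw [← pow_add]; congr 1; omega
    have hks1 := hpow1 (k - s)
    nlinarith
  -- termwise upper bound
  have h2 : ∀ i ∈ range s, (Q ^ (k - i) - 1) / ((Q ^ (s - i) - 1) * Q ^ (k - s)) ≤
      Q ^ (s - i) / (Q ^ (s - i) - 1) := by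
    intro i hi
    rw [mem_range] at hi
    have h2i : (2:ℝ) ≤ Q ^ (s - i) := hfac _ (by omega)
    have hkspos : (0:ℝ) < Q ^ (k - s) := by positivity
    have hsplit : Q ^ (s - i) * Q ^ (k - s) = Q ^ (k - i) := by
      rw [← pow_add]; congr 1; omega
    have : Q ^ (s - i) / (Q ^ (s - i) - 1) =
        Q ^ (s - i) * Q ^ (k - s) / ((Q ^ (s - i) - 1) * Q ^ (k - s)) := by
      rw [mul_div_mul_right _ _ (ne_of_gt hkspos)]
    rw [this]
    apply div_le_div₀ (by positivity) (by nlinarith) (mul_pos (by linarith) hkspos) le_rfl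
  constructor
  · have := Finset.prod_le_prod (f := fun _ : ℕ => (1:ℝ))
      (fun i _ => zero_le_one) h1
    simpa using this
  · -- product of upper bounds
    have hP : (∏ i ∈ range s, ((Q ^ (k - i) - 1) / ((Q ^ (s - i) - 1) * Q ^ (k - s)))) ≤
        ∏ i ∈ range s, (Q ^ (s - i) / (Q ^ (s - i) - 1)) :=
      Finset.prod_le_prod (fun i hi => le_trans zero_le_one (h1 i hi)) h2
    -- reindex
    have hre : (∏ i ∈ range s, (Q ^ (s - i) / (Q ^ (s - i) - 1))) =
        ∏ i ∈ range s, (Q ^ (i + 1) / (Q ^ (i + 1) - 1)) := by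
      rw [← Finset.prod_range_reflect (fun i => Q ^ (i + 1) / (Q ^ (i + 1) - 1)) s]
      apply Finset.prod_congr rfl
      intro i hi
      rw [mem_range] at hi
      have : s - i = (s - 1 - i) + 1 := by omega
      rw [this]
    obtain ⟨m, rfl⟩ : ∃ m, s = m + 1 := ⟨s - 1, by omega⟩
    rw [hre, Finset.prod_range_succ' (fun i => Q ^ (i + 1) / (Q ^ (i + 1) - 1)) m] at hP
    simp only [Nat.zero_add, pow_one] at hP
    -- bound the tail product by an exponential
    set c : ℝ := Q ^ 2 / (Q ^ 2 - 1) with hc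
    have hQ2 : (2:ℝ) ≤ Q ^ 2 := hfac 2 (by norm_num)
    have htail : (∏ i ∈ range m, (Q ^ (i + 1 + 1) / (Q ^ (i + 1 + 1) - 1))) ≤
        Real.exp (Q / ((Q ^ 2 - 1) * (Q - 1))) := by
      have hterm : ∀ i ∈ range m, Q ^ (i + 1 + 1) / (Q ^ (i + 1 + 1) - 1) ≤
          Real.exp (c * (1 / Q) ^ (i + 2)) := by
        intro i _
        set x : ℝ := (1 / Q) ^ (i + 2) with hxdef
        have hx0 : 0 < x := by positivity
        have hxle : x ≤ 1 / Q ^ 2 := by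
          rw [hxdef, div_pow, one_pow]
          apply div_le_div₀ zero_le_one le_rfl (by positivity)
          calc Q ^ 2 = Q ^ 2 * 1 := by ring
            _ ≤ Q ^ 2 * Q ^ i := by nlinarith [hpow1 i]
            _ = Q ^ (i + 2) := by rw [← pow_add]; ring_nf
        have hx1 : x < 1 := lt_of_le_of_lt hxle (by rw [div_lt_one (by linarith)]; linarith)
        have hpows : (2:ℝ) ≤ Q ^ (i + 1 + 1) := hfac _ (by omega)
        have heq : Q ^ (i + 1 + 1) / (Q ^ (i + 1 + 1) - 1) = 1 / (1 - x) := by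
          rw [hxdef, div_pow, one_pow]
          have h1 : Q ^ (i + 2) ≠ 0 := by positivity
          have h2 : Q ^ (i + 1 + 1) = Q ^ (i + 2) := by ring_nf
          have hP2 : (2:ℝ) ≤ Q ^ (i + 2) := hfac _ (by omega)
          have hstep : 1 - 1 / Q ^ (i + 2) = (Q ^ (i + 2) - 1) / Q ^ (i + 2) := by
            field_simp
          rw [h2, hstep, one_div_div]
        rw [heq]
        have step1 := qbin_aux_exp (le_of_lt hx0) hx1
        have step2 : x / (1 - x) ≤ c * x := by
          have h1x : (0:ℝ) < 1 - x := by linarith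
          rw [div_le_iff₀ h1x, hc]
          have hQ21 : (0:ℝ) < Q ^ 2 - 1 := by linarith
          have key : (Q ^ 2 - 1) / Q ^ 2 ≤ 1 - x := by
            have : (Q ^ 2 - 1) / Q ^ 2 = 1 - 1 / Q ^ 2 := by field_simp
            linarith
          calc x = (Q ^ 2 / (Q ^ 2 - 1)) * x * ((Q ^ 2 - 1) / Q ^ 2) := by
                field_simp
            _ ≤ (Q ^ 2 / (Q ^ 2 - 1)) * x * (1 - x) := by
                apply mul_le_mul_of_nonneg_left key (by positivity)
        exact le_trans step1 (Real.exp_le_exp.mpr step2)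
      calc (∏ i ∈ range m, (Q ^ (i + 1 + 1) / (Q ^ (i + 1 + 1) - 1)))
          ≤ ∏ i ∈ range m, Real.exp (c * (1 / Q) ^ (i + 2)) := by
            apply Finset.prod_le_prod _ hterm
            intro i _
            have h := hfac (i + 1 + 1) (by omega)
            have h' : (0:ℝ) < Q ^ (i + 1 + 1) - 1 := by linarith
            positivity
        _ = Real.exp (∑ i ∈ range m, c * (1 / Q) ^ (i + 2)) := by
            rw [← Real.exp_sum]
        _ ≤ Real.exp (Q / ((Q ^ 2 - 1) * (Q - 1))) := by
            rw [Real.exp_le_exp]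
            have hsum : ∑ i ∈ range m, c * (1 / Q) ^ (i + 2) =
                c * (1 / Q) ^ 2 * ∑ i ∈ range m, (1 / Q) ^ i := by
              rw [Finset.mul_sum]
              apply Finset.sum_congr rfl
              intro i _
              rw [pow_add]; ring
            rw [hsum]
            have hr1 : (1 / Q : ℝ) < 1 := by rw [div_lt_one hQ0]; linarith
            have hr0 : (0:ℝ) ≤ 1 / Q := by positivity
            have hgeom : ∑ i ∈ range m, (1 / Q : ℝ) ^ i ≤ 1 / (1 - 1 / Q) := by
              rw [geom_sum_eq (ne_of_lt hr1) m]
              rw [show ((1/Q:ℝ)^m - 1)/((1/Q) - 1) = (1 - (1/Q)^m)/(1 - 1/Q) by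
                rw [← neg_div_neg_eq]; ring_nf]
              apply div_le_div₀ zero_le_one (by nlinarith [pow_nonneg hr0 m])
                (by linarith) le_rfl
            have hcx : (0:ℝ) ≤ c * (1 / Q) ^ 2 := by
              apply mul_nonneg _ (by positivity)
              rw [hc]
              have : (0:ℝ) < Q ^ 2 - 1 := by nlinarith
              positivity
            calc c * (1 / Q) ^ 2 * ∑ i ∈ range m, (1 / Q : ℝ) ^ i
                ≤ c * (1 / Q) ^ 2 * (1 / (1 - 1 / Q)) :=
                  mul_le_mul_of_nonneg_left hgeom hcx
              _ = Q / ((Q ^ 2 - 1) * (Q - 1)) := by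
                  rw [hc]
                  have h1 : Q ^ 2 - 1 ≠ 0 := by nlinarith
                  have h2 : Q - 1 ≠ 0 := by intro h; nlinarith
                  have h3 : 1 - 1 / Q ≠ 0 := by
                    have : 1 / Q < 1 := by rw [div_lt_one hQ0]; linarith
                    intro h; linarith
                  field_simp
    calc (∏ i ∈ range (m+1), ((Q ^ (k - i) - 1) / ((Q ^ ((m+1) - i) - 1) * Q ^ (k - (m+1)))))
        ≤ (∏ i ∈ range m, (Q ^ (i + 1 + 1) / (Q ^ (i + 1 + 1) - 1))) * (Q / (Q - 1)) := hP
      _ ≤ Real.exp (Q / ((Q ^ 2 - 1) * (Q - 1))) * (Q / (Q - 1)) := by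
          have : (0:ℝ) < Q - 1 := by linarith
          apply mul_le_mul_of_nonneg_right htail (by positivity)
      _ = Q / (Q - 1) * Real.exp (Q / ((Q ^ 2 - 1) * (Q - 1))) := by ring

/-- For every prime power `q` and integers `1 ≤ s ≤ k`,
`1 ≤ q^(-s(k-s)) [k choose s]_q ≤ (q/(q-1)) e^(q/((q²-1)(q-1)))`. -/
theorem qbin_estimate (q k s : ℕ) (hq : IsPrimePow q) (hs : 1 ≤ s) (hsk : s ≤ k) :
    1 ≤ (qbin q k s : ℝ) / (q : ℝ) ^ (s * (k - s)) ∧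
    (qbin q k s : ℝ) / (q : ℝ) ^ (s * (k - s)) ≤
      (q : ℝ) / ((q : ℝ) - 1) * Real.exp ((q : ℝ) / (((q : ℝ) ^ 2 - 1) * ((q : ℝ) - 1))) := by
  have hq2 : (2:ℝ) ≤ (q:ℝ) := by exact_mod_cast hq.two_le
  have key : (qbin q k s : ℝ) / (q : ℝ) ^ (s * (k - s)) =
      ∏ i ∈ range s, (((q:ℝ) ^ (k - i) - 1) / (((q:ℝ) ^ (s - i) - 1) * (q:ℝ) ^ (k - s))) := by
    rw [qbin]
    push_cast
    rw [div_div, Finset.prod_div_distrib, Finset.prod_mul_distrib, Finset.prod_const,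
      Finset.card_range, ← pow_mul, Nat.mul_comm]
  rw [key]
  exact qbin_aux_main (q:ℝ) hq2 k s hs hsk
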